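/- For two agents with additive utilities over indivisible goods, suppose agent 2 strongly envies agent 1 in the allocation (T1, T2), where T1 = {g : u1(g) ≥ u2(g)}. If T1 can be partitioned into T_A' and T_B' such that agent 2 does not strongly envy agent 1 in the allocation A = (T_A', T_B' ∪ T2), then there exists an EF1 allocation A' with social welfare at least that of A. -/
import Mathlib


open Finset

/-- Agent with utility `u` and bundle `Ai` strongly envies the bundle `Aj`:
the envy persists even after removing any single good from `Aj`. -/
def StrongEnvy {G : Type*} [DecidableEq G] (u : G → ℝ) (Ai Aj : Finset G) : Prop :=
  Aj.Nonempty ∧ ∀ g ∈ Aj, ∑ x ∈ Ai, u x < ∑ x ∈ Aj.erase g, u x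

/-- EF1 for two agents: no agent strongly envies the other. -/
def EF1 {G : Type*} [DecidableEq G] (u1 u2 : G → ℝ) (A1 A2 : Finset G) : Prop :=
  ¬ StrongEnvy u1 A1 A2 ∧ ¬ StrongEnvy u2 A2 A1

set_option maxHeartbeats 1000000 in
/-- If agent 2 strongly envies agent 1 in `(T1, T2)` but `T1` can be
partitioned into `T_A'` and `T_B'` so that agent 2 does not strongly envy agent 1 in
`(T_A', T_B' ∪ T2)`, then there is an EF1 allocation with at least that social welfare. -/
theorem stmt_2 {G : Type*} [DecidableEq G] (M : Finset G) (u1 u2 : G → ℝ)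
    (h1nn : ∀ g ∈ M, 0 ≤ u1 g) (h2nn : ∀ g ∈ M, 0 ≤ u2 g)
    (T1 T2 : Finset G) (hT1 : T1 = M.filter (fun g => u2 g ≤ u1 g)) (hT2 : T2 = M \ T1)
    (hSE : StrongEnvy u2 T2 T1)
    (TA' TB' : Finset G) (hdisj : Disjoint TA' TB') (hunion : TA' ∪ TB' = T1)
    (hNo : ¬ StrongEnvy u2 (TB' ∪ T2) TA') :
    ∃ A1 A2 : Finset G, Disjoint A1 A2 ∧ A1 ∪ A2 = M ∧ EF1 u1 u2 A1 A2 ∧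
      ∑ g ∈ TA', u1 g + ∑ g ∈ TB' ∪ T2, u2 g ≤ ∑ g ∈ A1, u1 g + ∑ g ∈ A2, u2 g := by
  classical
  -- basic pointwise facts
  have hT1M : T1 ⊆ M := by rw [hT1]; exact filter_subset _ _
  have hT2M : T2 ⊆ M := by rw [hT2]; exact sdiff_subset
  have hpt1 : ∀ g ∈ T1, u2 g ≤ u1 g := by
    intro g hg; rw [hT1, mem_filter] at hg; exact hg.2
  have hpt2 : ∀ g ∈ T2, u1 g ≤ u2 g := by
    intro g hg
    rw [hT2, mem_sdiff] at hg
    by_contra h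
    exact hg.2 (by rw [hT1, mem_filter]; exact ⟨hg.1, le_of_lt (not_le.mp h)⟩)
  have hT1ne : T1.Nonempty := hSE.1
  have hTA'T1 : TA' ⊆ T1 := hunion ▸ subset_union_left
  have hcomp : TB' ∪ T2 = M \ TA' := by
    ext a
    simp only [mem_union, mem_sdiff]
    have h1 : a ∈ TA' → a ∈ T1 := fun h => hTA'T1 h
    have h2 : a ∈ TB' → a ∈ T1 := fun h => hunion ▸ mem_union_right _ h
    have h3 : a ∈ TA' → a ∉ TB' := fun h => Finset.disjoint_left.mp hdisj h
    have h4 : a ∈ T1 ↔ a ∈ TA' ∨ a ∈ TB' := by rw [← hunion, mem_union]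
    have h5 : a ∈ T2 ↔ a ∈ M ∧ a ∉ T1 := by rw [hT2, mem_sdiff]
    have h6 : a ∈ T1 → a ∈ M := fun h => hT1M h
    tauto
  -- the family F of "agent-2-OK" sets
  set F : Finset (Finset G) :=
    T1.powerset.filter (fun Y => ¬ StrongEnvy u2 (M \ Y) Y) with hF
  have hTAF : TA' ∈ F := by
    rw [hF, mem_filter, mem_powerset]
    exact ⟨hTA'T1, by rwa [hcomp] at hNo⟩
  -- choose X maximizing φ, then card
  set φ : Finset G → ℝ := fun S => ∑ g ∈ S, (u1 g - u2 g) with hφ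
  obtain ⟨X₀, hX₀F, hmax₀⟩ := F.exists_max_image φ ⟨TA', hTAF⟩
  set F' : Finset (Finset G) := F.filter (fun Y => φ X₀ ≤ φ Y) with hF'
  have hX₀F' : X₀ ∈ F' := by rw [hF', mem_filter]; exact ⟨hX₀F, le_refl _⟩
  obtain ⟨X, hXF', hmaxc⟩ := F'.exists_max_image (fun Y => Y.card) ⟨X₀, hX₀F'⟩
  rw [hF', mem_filter] at hXF'
  obtain ⟨hXF, hφX₀X⟩ := hXF'
  have hφXeq : φ X = φ X₀ := le_antisymm (hmax₀ X hXF) hφX₀X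
  have hφmax : ∀ Y ∈ F, φ Y ≤ φ X := fun Y hY => hφXeq ▸ hmax₀ Y hY
  have hcardmax : ∀ Y ∈ F, φ X ≤ φ Y → Y.card ≤ X.card := by
    intro Y hY hle
    exact hmaxc Y (by rw [hF', mem_filter]; exact ⟨hY, hφXeq ▸ hle⟩)
  rw [hF, mem_filter, mem_powerset] at hXF
  obtain ⟨hXT1, hXok2⟩ := hXF
  have hXM : X ⊆ M := hXT1.trans hT1M
  -- split M \ X
  have hMXsplit : M \ X = (T1 \ X) ∪ T2 := by
    ext a
    simp only [mem_sdiff, mem_union]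
    have h1 : a ∈ X → a ∈ T1 := fun h => hXT1 h
    have h5 : a ∈ T2 ↔ a ∈ M ∧ a ∉ T1 := by rw [hT2, mem_sdiff]
    have h6 : a ∈ T1 → a ∈ M := fun h => hT1M h
    tauto
  have hRdisjT2 : Disjoint (T1 \ X) T2 := by
    rw [hT2]
    exact disjoint_of_subset_left sdiff_subset sdiff_disjoint.symm
  have hsum1 : ∑ g ∈ M \ X, u1 g = ∑ g ∈ T1 \ X, u1 g + ∑ g ∈ T2, u1 g := by
    rw [hMXsplit, sum_union hRdisjT2]
  have hsum2 : ∑ g ∈ M \ X, u2 g = ∑ g ∈ T1 \ X, u2 g + ∑ g ∈ T2, u2 g := by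
    rw [hMXsplit, sum_union hRdisjT2]
  have hT2nn : (0:ℝ) ≤ ∑ g ∈ T2, u2 g := sum_nonneg fun g hg => h2nn g (hT2M hg)
  have hT12 : ∑ g ∈ T2, u1 g ≤ ∑ g ∈ T2, u2 g := sum_le_sum hpt2
  -- agent 1 does not strongly envy
  have hXok1 : ¬ StrongEnvy u1 X (M \ X) := by
    rintro ⟨hMXne, hall1⟩
    by_cases hR : T1 \ X = ∅
    · -- X = T1
      have hXeq : X = T1 := le_antisymm hXT1 (sdiff_eq_empty_iff_subset.mp hR)
      obtain ⟨g2, hg2⟩ := hMXne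
      obtain ⟨g0, hg0⟩ := hT1ne
      have h1 := hall1 g2 hg2
      have h2 := hSE.2 g0 hg0
      have e1 : ∑ x ∈ (M \ X).erase g2, u1 x ≤ ∑ x ∈ M \ X, u1 x :=
        sum_le_sum_of_subset_of_nonneg (erase_subset _ _)
          (fun g hg _ => h1nn g (mem_sdiff.mp hg).1)
      have e2 : ∑ x ∈ T1.erase g0, u2 x ≤ ∑ x ∈ T1, u2 x :=
        sum_le_sum_of_subset_of_nonneg (erase_subset _ _)
          (fun g hg _ => h2nn g (hT1M hg))
      have e3 : ∑ x ∈ T1, u2 x ≤ ∑ x ∈ T1, u1 x := sum_le_sum hpt1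
      have e4 : ∑ x ∈ M \ X, u1 x ≤ ∑ x ∈ T2, u2 x := by
        rw [hsum1, hR, sum_empty]; linarith
      have e5 : ∑ x ∈ T1, u1 x = ∑ x ∈ X, u1 x := by rw [hXeq]
      linarith
    · -- pick g₁ in T1 \ X with maximal u2
      obtain ⟨g₁, hg₁R, hg₁max⟩ :=
        (T1 \ X).exists_max_image u2 (nonempty_of_ne_empty hR)
      have hg₁T1 : g₁ ∈ T1 := (mem_sdiff.mp hg₁R).1
      have hg₁X : g₁ ∉ X := (mem_sdiff.mp hg₁R).2
      have hg₁MX : g₁ ∈ M \ X := mem_sdiff.mpr ⟨hT1M hg₁T1, hg₁X⟩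
      -- insert g₁ X is not in F
      have hins : insert g₁ X ∉ F := by
        intro hmem
        have hφle := hφmax _ hmem
        have hφins : φ (insert g₁ X) = (u1 g₁ - u2 g₁) + φ X := by
          rw [hφ]; exact sum_insert hg₁X
        have hnn : 0 ≤ u1 g₁ - u2 g₁ := sub_nonneg.mpr (hpt1 g₁ hg₁T1)
        have hcard := hcardmax _ hmem (by rw [hφins]; linarith)
        rw [card_insert_of_notMem hg₁X] at hcard
        omega
      have hinsSE : StrongEnvy u2 (M \ insert g₁ X) (insert g₁ X) := by
        by_contra h
        exact hins (by
          rw [hF, mem_filter, mem_powerset]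
          exact ⟨insert_subset hg₁T1 hXT1, h⟩)
      have ha := hinsSE.2 g₁ (mem_insert_self _ _)
      rw [erase_insert hg₁X] at ha
      have hMXI : M \ insert g₁ X = (M \ X).erase g₁ := by
        ext a
        simp only [mem_sdiff, mem_erase, mem_insert]
        tauto
      have herase : u2 g₁ + ∑ x ∈ (M \ X).erase g₁, u2 x = ∑ x ∈ M \ X, u2 x :=
        add_sum_erase _ _ hg₁MX
      rw [hMXI] at ha
      -- ha : ∑ (M\X) u2 - u2 g₁ < ∑ X u2 (via herase)
      -- pick h* maximizing u1 in M \ X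
      obtain ⟨hs, hhsMX, hhsmax⟩ := (M \ X).exists_max_image u1 hMXne
      have hb := hall1 hs hhsMX
      have herase1 : u1 hs + ∑ x ∈ (M \ X).erase hs, u1 x = ∑ x ∈ M \ X, u1 x :=
        add_sum_erase _ _ hhsMX
      have hg₁hs : u1 g₁ ≤ u1 hs := hhsmax g₁ hg₁MX
      have hg₁12 : u2 g₁ ≤ u1 g₁ := hpt1 g₁ hg₁T1
      -- key : φ X < φ (T1 \ X)
      have hkey : ∑ g ∈ X, u1 g - ∑ g ∈ X, u2 g
          < ∑ g ∈ T1 \ X, u1 g - ∑ g ∈ T1 \ X, u2 g := by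
        have hX12 : ∑ g ∈ X, u2 g ≤ ∑ g ∈ X, u1 g :=
          sum_le_sum fun g hg => hpt1 g (hXT1 hg)
        linarith [hsum1, hsum2]
      -- T1 \ X ∈ F
      have hRF : T1 \ X ∈ F := by
        rw [hF, mem_filter, mem_powerset]
        refine ⟨sdiff_subset, ?_⟩
        rintro ⟨-, hallR⟩
        have hz := hallR g₁ hg₁R
        have hMR : M \ (T1 \ X) = X ∪ T2 := by
          ext a
          simp only [mem_sdiff, mem_union]
          have h1 : a ∈ X → a ∈ T1 := fun h => hXT1 h
          have h5 : a ∈ T2 ↔ a ∈ M ∧ a ∉ T1 := by rw [hT2, mem_sdiff]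
          have h6 : a ∈ T1 → a ∈ M := fun h => hT1M h
          have h7 : a ∈ X → a ∈ M := fun h => hXM h
          tauto
        have hXdisjT2 : Disjoint X T2 := by
          rw [hT2]
          exact disjoint_of_subset_left hXT1 sdiff_disjoint.symm
        have hsumMR : ∑ x ∈ M \ (T1 \ X), u2 x = ∑ x ∈ X, u2 x + ∑ x ∈ T2, u2 x := by
          rw [hMR, sum_union hXdisjT2]
        have heraseR : u2 g₁ + ∑ x ∈ (T1 \ X).erase g₁, u2 x = ∑ x ∈ T1 \ X, u2 x :=
          add_sum_erase _ _ hg₁R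
        rw [hsumMR] at hz
        linarith
      have h9 : ∑ g ∈ T1 \ X, (u1 g - u2 g) ≤ ∑ g ∈ X, (u1 g - u2 g) := hφmax _ hRF
      rw [sum_sub_distrib, sum_sub_distrib] at h9
      linarith
  refine ⟨X, M \ X, disjoint_sdiff, union_sdiff_of_subset hXM, ⟨hXok1, hXok2⟩, ?_⟩
  -- welfare
  rw [hcomp]
  have hTA'M : TA' ⊆ M := hTA'T1.trans hT1M
  have e1 : ∑ g ∈ M \ TA', u2 g = ∑ g ∈ M, u2 g - ∑ g ∈ TA', u2 g :=
    sum_sdiff_eq_sub hTA'M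
  have e2 : ∑ g ∈ M \ X, u2 g = ∑ g ∈ M, u2 g - ∑ g ∈ X, u2 g :=
    sum_sdiff_eq_sub hXM
  have e3 : ∑ g ∈ TA', (u1 g - u2 g) ≤ ∑ g ∈ X, (u1 g - u2 g) := hφmax _ hTAF
  rw [sum_sub_distrib, sum_sub_distrib] at e3
  linarith
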